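/- Let a < 0 and let 0 < c ≤ D < 1. There is no differentiable function g : ℝ → ℝ satisfying c ≤ g(t) ≤ D for all t ∈ ℝ and g'(t) = a · g(t) · log(g(t)) for all t ∈ ℝ. -/

import Mathlib

/-- ODE content of the first part of Corollary 1.2(2) of the paper: for `a < 0` and
`0 < c ≤ D < 1` there is no differentiable `g : ℝ → ℝ` with `c ≤ g ≤ D` solving
`g' = a g log g` on all of ℝ. -/
theorem no_bounded_solution_neg_a (a c D : ℝ) (ha : a < 0) (hc : 0 < c) (hcD : c ≤ D)
    (hD : D < 1) :
    ¬ ∃ g : ℝ → ℝ, Differentiable ℝ g ∧ (∀ t : ℝ, c ≤ g t ∧ g t ≤ D) ∧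
      (∀ t : ℝ, deriv g t = a * g t * Real.log (g t)) := by
  rintro ⟨g, hg, hbound, hode⟩
  have hgpos : ∀ t, 0 < g t := fun t => lt_of_lt_of_le hc (hbound t).1
  have hglt1 : ∀ t, g t < 1 := fun t => lt_of_le_of_lt (hbound t).2 hD
  have hlogneg : ∀ t, Real.log (g t) < 0 := fun t => Real.log_neg (hgpos t) (hglt1 t)
  set f : ℝ → ℝ := fun t => Real.log (-Real.log (g t)) with hf
  have hderiv : ∀ t, HasDerivAt f a t := by
    intro t
    have h1 : HasDerivAt g (a * g t * Real.log (g t)) t := by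
      have := (hg t).hasDerivAt
      rwa [hode t] at this
    have h2 : HasDerivAt (fun s => Real.log (g s)) ((g t)⁻¹ * (a * g t * Real.log (g t))) t :=
      (Real.hasDerivAt_log (hgpos t).ne').comp t h1
    have h3 : HasDerivAt (fun s => -Real.log (g s))
        (-((g t)⁻¹ * (a * g t * Real.log (g t)))) t := h2.neg
    have hL : -Real.log (g t) ≠ 0 := (neg_pos.mpr (hlogneg t)).ne'
    have h4 : HasDerivAt f ((-Real.log (g t))⁻¹ * -((g t)⁻¹ * (a * g t * Real.log (g t)))) t :=
      by have := (Real.hasDerivAt_log hL).comp t h3; exact this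
    have heq : (-Real.log (g t))⁻¹ * -((g t)⁻¹ * (a * g t * Real.log (g t))) = a := by
      field_simp [(hlogneg t).ne, (hgpos t).ne']
    rwa [heq] at h4
  -- F := f - a t is constant
  have hconst : ∀ t : ℝ, f t - a * t = f 0 - a * 0 := by
    intro t
    have hF : ∀ s : ℝ, HasDerivAt (fun u => f u - a * u) 0 s := by
      intro s
      have := (hderiv s).sub ((hasDerivAt_id s).const_mul a)
      rw [show (0:ℝ) = a - a * 1 by ring]
      exact this
    exact is_const_of_deriv_eq_zero (fun s => (hF s).differentiableAt)
      (fun s => (hF s).deriv) t 0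
  have hft : ∀ t : ℝ, f t = f 0 + a * t := by
    intro t
    have := hconst t
    linarith
  -- upper bound on f
  have hub : ∀ t : ℝ, f t ≤ Real.log (-Real.log c) := by
    intro t
    apply Real.log_le_log (neg_pos.mpr (hlogneg t))
    have : Real.log c ≤ Real.log (g t) := Real.log_le_log hc (hbound t).1
    linarith
  -- contradiction
  set T : ℝ := (Real.log (-Real.log c) + 1 - f 0) / a with hT
  have haT : a * T = Real.log (-Real.log c) + 1 - f 0 := by
    rw [hT, mul_div_cancel₀ _ ha.ne]
  have := hft T
  have h1 := hub T
  rw [this, haT] at h1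
  linarith
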